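/- Let d ≥ 1 and N ≥ 1, let Σ₀,…,Σ_N be symmetric positive semidefinite d × d real matrices, and define the 2d × 2d matrices Q = [[12,−6],[−6,4]] ⊗ I_d and Φ = [[1,1],[0,1]] ⊗ I_d (Kronecker products with the d × d identity). For 2d × 2d matrices Σ̂₀,…,Σ̂_N and S₀,…,S_{N−1}, define the cost L = Σ_{i=0}^{N−1} Tr( Q·Σ̂_{i+1} + Φᵀ·Q·Φ·Σ̂_i − 2·Q·Φ·S_i ). Then the following two infima are equal: (1) the infimum of L over all symmetric positive semidefinite 2d(N+1) × 2d(N+1) matrices Σ̂ whose (i,i) 2d × 2d diagonal block Σ̂_i has upper-left d × d block equal to Σ_i for every i = 0,…,N, where S_i denotes the (i,i+1) 2d × 2d block of Σ̂; and (2) the infimum of L over all tuples (Σ̂₀,…,Σ̂_N, S₀,…,S_{N−1}) of 2d × 2d matrices such that for every i = 0,…,N−1 the block matrix [[Σ̂_i, S_i],[S_iᵀ, Σ̂_{i+1}]] is positive semidefinite, and the upper-left d × d block of Σ̂_i equals Σ_i for every i = 0,…,N. -/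

import Mathlib

open Matrix Kronecker

noncomputable section

/-- `Q = [[12,−6],[−6,4]] ⊗ I_d`. -/
def Qmat (d : ℕ) : Matrix (Fin 2 × Fin d) (Fin 2 × Fin d) ℝ :=
  (!![12, -6; -6, 4] : Matrix (Fin 2) (Fin 2) ℝ) ⊗ₖ (1 : Matrix (Fin d) (Fin d) ℝ)

/-- `Φ = [[1,1],[0,1]] ⊗ I_d`. -/
def Phimat (d : ℕ) : Matrix (Fin 2 × Fin d) (Fin 2 × Fin d) ℝ :=
  (!![1, 1; 0, 1] : Matrix (Fin 2) (Fin 2) ℝ) ⊗ₖ (1 : Matrix (Fin d) (Fin d) ℝ)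

/-- The SDP cost `L = Σ_{i=0}^{N−1} Tr(Q Σ̂_{i+1} + Φᵀ Q Φ Σ̂_i − 2 Q Φ S_i)`. -/
def sdpCost (d N : ℕ)
    (Sh : Fin (N + 1) → Matrix (Fin 2 × Fin d) (Fin 2 × Fin d) ℝ)
    (S : Fin N → Matrix (Fin 2 × Fin d) (Fin 2 × Fin d) ℝ) : ℝ :=
  ∑ i : Fin N,
    (Qmat d * Sh i.succ + (Phimat d)ᵀ * Qmat d * Phimat d * Sh i.castSucc
      - (2:ℝ) • (Qmat d * Phimat d * S i)).trace

open scoped RealInnerProductSpace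

section AuxStmt16


variable {V : Type*} [NormedAddCommGroup V] [InnerProductSpace ℝ V] [FiniteDimensional ℝ V]
variable {κ : Type*} [Fintype κ] [DecidableEq κ]

lemma glue_aux (u w f : κ → V)
    (h : ∀ a b, ⟪u a, u b⟫ = ⟪f a, f b⟫) :
    ∃ g : κ → V, (∀ a b, ⟪g a, g b⟫ = ⟪w a, w b⟫) ∧
      (∀ a b, ⟪f a, g b⟫ = ⟪u a, w b⟫) := by
  classical
  set T : (κ → ℝ) →ₗ[ℝ] V := Fintype.linearCombination ℝ u with hT
  set T' : (κ → ℝ) →ₗ[ℝ] V := Fintype.linearCombination ℝ f with hT'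
  have key : ∀ c, ⟪T c, T c⟫ = ⟪T' c, T' c⟫ := by
    intro c
    simp only [hT, hT', Fintype.linearCombination_apply, sum_inner, inner_sum,
      real_inner_smul_left, real_inner_smul_right]
    refine Finset.sum_congr rfl fun a _ => Finset.sum_congr rfl fun b _ => ?_
    rw [h]
  have hnorm : ∀ c, ‖T c‖ = ‖T' c‖ := by
    intro c
    rw [norm_eq_sqrt_real_inner, norm_eq_sqrt_real_inner, key c]
  have hker : LinearMap.ker T ≤ LinearMap.ker T' := by
    intro c hc
    simp only [LinearMap.mem_ker] at hc ⊢
    have := hnorm c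
    rw [hc, norm_zero] at this
    exact norm_eq_zero.mp this.symm
  set e := T.quotKerEquivRange with he
  set L0 : LinearMap.range T →ₗ[ℝ] V :=
    ((LinearMap.ker T).liftQ T' hker).comp e.symm.toLinearMap with hL0def
  have hL0 : ∀ c (hc : T c ∈ LinearMap.range T), L0 ⟨T c, hc⟩ = T' c := by
    intro c hc
    have h1 : e.symm ⟨T c, hc⟩ = Submodule.Quotient.mk c :=
      T.quotKerEquivRange_symm_apply_image c hc
    simp [hL0def, h1, Submodule.liftQ_apply]
  have hL0norm : ∀ x : LinearMap.range T, ‖L0 x‖ = ‖x‖ := by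
    rintro ⟨x, hx⟩
    obtain ⟨c, rfl⟩ := hx
    rw [hL0 c (LinearMap.mem_range_self T c), ← hnorm c]
    rfl
  set L : LinearMap.range T →ₗᵢ[ℝ] V := ⟨L0, hL0norm⟩ with hL
  set E := L.extend with hE
  have humem : ∀ a, u a ∈ LinearMap.range T := by
    intro a
    refine ⟨Pi.single a 1, ?_⟩
    simp [hT, Fintype.linearCombination_apply, Pi.single_apply]
  have hEu : ∀ a, E (u a) = f a := by
    intro a
    have h2 : E (u a) = L ⟨u a, humem a⟩ := L.extend_apply ⟨u a, humem a⟩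
    rw [h2]
    have h3 : (⟨u a, humem a⟩ : LinearMap.range T) =
        ⟨T (Pi.single a 1), LinearMap.mem_range_self T _⟩ := by
      ext
      simp [hT, Fintype.linearCombination_apply, Pi.single_apply]
    show L0 _ = f a
    rw [h3, hL0]
    simp [hT', Fintype.linearCombination_apply, Pi.single_apply]
  refine ⟨fun b => E (w b), fun a b => ?_, fun a b => ?_⟩
  · exact E.inner_map_map (w a) (w b)
  · rw [← hEu a]
    exact E.inner_map_map (u a) (w b)

set_option linter.unusedSectionVars false in
lemma chain_aux {N : ℕ} (hN : 1 ≤ N)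
    (G : Fin (N + 1) → κ → κ → ℝ) (C : Fin N → κ → κ → ℝ)
    (p q : Fin N → κ → V)
    (hp : ∀ i a b, ⟪p i a, p i b⟫ = G i.castSucc a b)
    (hq : ∀ i a b, ⟪q i a, q i b⟫ = G i.succ a b)
    (hc : ∀ i a b, ⟪p i a, q i b⟫ = C i a b) :
    ∃ f : Fin (N + 1) → κ → V,
      (∀ i a b, ⟪f i a, f i b⟫ = G i a b) ∧
      (∀ (i : Fin N) a b, ⟪f i.castSucc a, f i.succ b⟫ = C i a b) := by
  have claim : ∀ n : ℕ, n ≤ N → ∃ f : Fin (N + 1) → κ → V,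
      (∀ i : Fin (N + 1), i.val ≤ n → ∀ a b, ⟪f i a, f i b⟫ = G i a b) ∧
      (∀ i : Fin N, i.val < n → ∀ a b, ⟪f i.castSucc a, f i.succ b⟫ = C i a b) := by
    intro n
    induction n with
    | zero =>
      intro _
      refine ⟨fun _ => p ⟨0, hN⟩, fun i hi a b => ?_, fun i hi => absurd hi (by omega)⟩
      have hi0 : i = (⟨0, hN⟩ : Fin N).castSucc := by
        ext; simpa using hi
      rw [hi0, hp]
    | succ n ih =>
      intro hn1
      obtain ⟨f, h1, h2⟩ := ih (by omega)
      have hnN : n < N := by omega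
      set j : Fin N := ⟨n, hnN⟩ with hj
      have hpf : ∀ a b, ⟪p j a, p j b⟫ = ⟪f j.castSucc a, f j.castSucc b⟫ := by
        intro a b
        rw [hp, h1 j.castSucc (by simp [hj])]
      obtain ⟨g, hg1, hg2⟩ := glue_aux (p j) (q j) (f j.castSucc) hpf
      refine ⟨fun i => if i.val = n + 1 then g else f i, fun i hi a b => ?_, fun i hi a b => ?_⟩
      · by_cases hieq : i.val = n + 1
        · have hjs : j.succ = i := by ext; simp [hj, hieq]
          beta_reduce
          rw [if_pos hieq, hg1, hq, hjs]
        · beta_reduce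
          rw [if_neg hieq]
          exact h1 i (by omega) a b
      · by_cases hieq : i.val = n
        · have hij : i = j := by ext; simp [hj, hieq]
          have e1 : ¬ ((i.castSucc : Fin (N+1)) : ℕ) = n + 1 := by
            rw [Fin.coe_castSucc, hieq]; omega
          have e2 : ((i.succ : Fin (N+1)) : ℕ) = n + 1 := by
            rw [Fin.val_succ, hieq]
          beta_reduce
          rw [if_neg e1, if_pos e2, hij, hg2, hc]
        · have hlt : i.val < n := by omega
          have e1 : ¬ ((i.castSucc : Fin (N+1)) : ℕ) = n + 1 := by
            rw [Fin.coe_castSucc]; omega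
          have e2 : ¬ ((i.succ : Fin (N+1)) : ℕ) = n + 1 := by
            rw [Fin.val_succ]; omega
          beta_reduce
          rw [if_neg e1, if_neg e2]
          exact h2 i hlt a b
  obtain ⟨f, h1, h2⟩ := claim N le_rfl
  exact ⟨f, fun i a b => h1 i (by omega) a b, fun i a b => h2 i i.isLt a b⟩

open scoped MatrixOrder in
def Matrix.PosSemidef.sqrt {n : Type*} [Fintype n] [DecidableEq n] {X : Matrix n n ℝ}
    (_hX : X.PosSemidef) : Matrix n n ℝ := CFC.sqrt X

open scoped MatrixOrder in
lemma Matrix.PosSemidef.posSemidef_sqrt {n : Type*} [Fintype n] [DecidableEq n] {X : Matrix n n ℝ}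
    (hX : X.PosSemidef) : hX.sqrt.PosSemidef :=
  Matrix.nonneg_iff_posSemidef.mp (CFC.sqrt_nonneg X)

open scoped MatrixOrder in
lemma Matrix.PosSemidef.sqrt_mul_self {n : Type*} [Fintype n] [DecidableEq n] {X : Matrix n n ℝ}
    (hX : X.PosSemidef) : hX.sqrt * hX.sqrt = X :=
  CFC.sqrt_mul_sqrt_self X (Matrix.nonneg_iff_posSemidef.mpr hX)

lemma sqrt_gram {n : Type*} [Fintype n] [DecidableEq n] {X : Matrix n n ℝ} (hX : X.PosSemidef)
    (x y : n) : ∑ r, hX.sqrt r x * hX.sqrt r y = X x y := by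
  have hs : ∀ a b, hX.sqrt a b = hX.sqrt b a := by
    intro a b
    simpa using hX.posSemidef_sqrt.isHermitian.apply b a
  calc ∑ r, hX.sqrt r x * hX.sqrt r y = ∑ r, hX.sqrt x r * hX.sqrt r y := by
        refine Finset.sum_congr rfl fun r _ => by rw [hs r x]
    _ = (hX.sqrt * hX.sqrt) x y := (Matrix.mul_apply).symm
    _ = X x y := by rw [hX.sqrt_mul_self]

def toE {ι : Type*} [Fintype ι] (v : ι → ℝ) : EuclideanSpace ℝ ι := WithLp.toLp 2 v

lemma euclid_inner {ι : Type*} [Fintype ι] (x y : EuclideanSpace ℝ ι) :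
    ⟪x, y⟫ = ∑ i, x i * y i := by
  simp [PiLp.inner_apply, RCLike.inner_apply, mul_comm]

end AuxStmt16


/-- The full SDP over a PSD `2d(N+1) × 2d(N+1)` matrix with prescribed position-position
diagonal blocks has the same optimal value as the relaxed SDP in which only the
consecutive `2×2`-block submatrices `[[Σ̂ᵢ, Sᵢ],[Sᵢᵀ, Σ̂ᵢ₊₁]]` are required PSD. -/
theorem stmt16 (d N : ℕ) (hd : 1 ≤ d) (hN : 1 ≤ N)
    (Sig : Fin (N + 1) → Matrix (Fin d) (Fin d) ℝ)
    (hSig : ∀ i, (Sig i).PosSemidef) :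
    sInf { y : ℝ |
        ∃ M : Matrix (Fin (N + 1) × (Fin 2 × Fin d)) (Fin (N + 1) × (Fin 2 × Fin d)) ℝ,
          M.PosSemidef ∧
          (∀ (i : Fin (N + 1)) (k l : Fin d),
            M (i, ((0 : Fin 2), k)) (i, ((0 : Fin 2), l)) = Sig i k l) ∧
          y = sdpCost d N (fun i a b => M (i, a) (i, b))
                (fun i a b => M (i.castSucc, a) (i.succ, b)) }
      =
      sInf { y : ℝ |
        ∃ Sh : Fin (N + 1) → Matrix (Fin 2 × Fin d) (Fin 2 × Fin d) ℝ,
        ∃ S : Fin N → Matrix (Fin 2 × Fin d) (Fin 2 × Fin d) ℝ,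
          (∀ i : Fin N,
            (Matrix.fromBlocks (Sh i.castSucc) (S i) (S i)ᵀ (Sh i.succ)).PosSemidef) ∧
          (∀ (i : Fin (N + 1)) (k l : Fin d),
            Sh i ((0 : Fin 2), k) ((0 : Fin 2), l) = Sig i k l) ∧
          y = sdpCost d N Sh S } := by
  classical
  congr 1
  apply Set.Subset.antisymm
  · -- full ⊆ relaxed
    rintro y ⟨M, hM, hSig2, rfl⟩
    refine ⟨fun i a b => M (i, a) (i, b), fun i a b => M (i.castSucc, a) (i.succ, b),
      ?_, hSig2, rfl⟩
    intro i
    have hsub := hM.submatrix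
      (Sum.elim (fun a : Fin 2 × Fin d => ((i.castSucc : Fin (N+1)), a))
        (fun a : Fin 2 × Fin d => ((i.succ : Fin (N+1)), a)))
    have heq : Matrix.fromBlocks
        (Matrix.of fun a b => M (i.castSucc, a) (i.castSucc, b))
        (Matrix.of fun a b => M (i.castSucc, a) (i.succ, b))
        (Matrix.of fun a b => M (i.castSucc, a) (i.succ, b))ᵀ
        (Matrix.of fun a b => M (i.succ, a) (i.succ, b)) =
        M.submatrix
          (Sum.elim (fun a : Fin 2 × Fin d => ((i.castSucc : Fin (N+1)), a))
            (fun a : Fin 2 × Fin d => ((i.succ : Fin (N+1)), a)))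
          (Sum.elim (fun a : Fin 2 × Fin d => ((i.castSucc : Fin (N+1)), a))
            (fun a : Fin 2 × Fin d => ((i.succ : Fin (N+1)), a))) := by
      ext x y
      cases x with
      | inl a =>
        cases y with
        | inl b => rfl
        | inr b => rfl
      | inr a =>
        cases y with
        | inl b =>
          show M (i.castSucc, b) (i.succ, a) = M (i.succ, a) (i.castSucc, b)
          simpa using hM.isHermitian.apply (i.succ, a) (i.castSucc, b)
        | inr b => rfl
    exact heq ▸ hsub
  · -- relaxed ⊆ full
    rintro y ⟨Sh, S, hPSD, hSig2, rfl⟩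
    have hp : ∀ (i : Fin N) (a b : Fin 2 × Fin d),
        ⟪toE (fun r => (hPSD i).sqrt r (Sum.inl a)),
         toE (fun r => (hPSD i).sqrt r (Sum.inl b))⟫ =
        Sh i.castSucc a b := by
      intro i a b
      rw [euclid_inner]
      simp only [toE]
      rw [show ∑ r : (Fin 2 × Fin d) ⊕ (Fin 2 × Fin d), (hPSD i).sqrt r (Sum.inl a) * (hPSD i).sqrt r (Sum.inl b) =
        Matrix.fromBlocks (Sh i.castSucc) (S i) (S i)ᵀ (Sh i.succ) (Sum.inl a) (Sum.inl b)
        from sqrt_gram (hPSD i) _ _]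
      simp [Matrix.fromBlocks_apply₁₁]
    have hq : ∀ (i : Fin N) (a b : Fin 2 × Fin d),
        ⟪toE (fun r => (hPSD i).sqrt r (Sum.inr a)),
         toE (fun r => (hPSD i).sqrt r (Sum.inr b))⟫ =
        Sh i.succ a b := by
      intro i a b
      rw [euclid_inner]
      simp only [toE]
      rw [show ∑ r : (Fin 2 × Fin d) ⊕ (Fin 2 × Fin d), (hPSD i).sqrt r (Sum.inr a) * (hPSD i).sqrt r (Sum.inr b) =
        Matrix.fromBlocks (Sh i.castSucc) (S i) (S i)ᵀ (Sh i.succ) (Sum.inr a) (Sum.inr b)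
        from sqrt_gram (hPSD i) _ _]
      simp [Matrix.fromBlocks_apply₂₂]
    have hcp : ∀ (i : Fin N) (a b : Fin 2 × Fin d),
        ⟪toE (fun r => (hPSD i).sqrt r (Sum.inl a)),
         toE (fun r => (hPSD i).sqrt r (Sum.inr b))⟫ =
        S i a b := by
      intro i a b
      rw [euclid_inner]
      simp only [toE]
      rw [show ∑ r : (Fin 2 × Fin d) ⊕ (Fin 2 × Fin d), (hPSD i).sqrt r (Sum.inl a) * (hPSD i).sqrt r (Sum.inr b) =
        Matrix.fromBlocks (Sh i.castSucc) (S i) (S i)ᵀ (Sh i.succ) (Sum.inl a) (Sum.inr b)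
        from sqrt_gram (hPSD i) _ _]
      simp [Matrix.fromBlocks_apply₁₂]
    obtain ⟨f, hf1, hf2⟩ := chain_aux (V := EuclideanSpace ℝ ((Fin 2 × Fin d) ⊕ (Fin 2 × Fin d))) hN
      (fun i a b => Sh i a b) (fun i a b => S i a b)
      (fun i a => toE (fun r => (hPSD i).sqrt r (Sum.inl a)))
      (fun i a => toE (fun r => (hPSD i).sqrt r (Sum.inr a)))
      hp hq hcp
    set W : Matrix ((Fin 2 × Fin d) ⊕ (Fin 2 × Fin d)) (Fin (N + 1) × (Fin 2 × Fin d)) ℝ := fun r x => f x.1 x.2 r with hW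
    have hMentry : ∀ (i : Fin (N + 1)) (a : Fin 2 × Fin d) (j : Fin (N + 1)) (b : Fin 2 × Fin d),
        (Wᴴ * W) (i, a) (j, b) = ⟪f i a, f j b⟫ := by
      intro i a j b
      rw [euclid_inner, Matrix.mul_apply]
      simp_rw [Matrix.conjTranspose_apply]
      simp [Matrix.mul_apply, Matrix.conjTranspose_apply, hW]
    refine ⟨Wᴴ * W, Matrix.posSemidef_conjTranspose_mul_self W, ?_, ?_⟩
    · intro i k l
      rw [hMentry, hf1]
      exact hSig2 i k l
    · have e1 : (fun i a b => (Wᴴ * W) (i, a) (i, b)) = fun i a b => Sh i a b := by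
        funext i a b
        rw [hMentry, hf1]
      have e2 : (fun (i : Fin N) a b => (Wᴴ * W) (i.castSucc, a) (i.succ, b)) =
          fun i a b => S i a b := by
        funext i a b
        rw [hMentry, hf2]
      rw [e1, e2]
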